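/- For every n with 1 ≤ n ≤ N_S, there exists a unitary matrix Θ ∈ ℂ^{N_S×N_S} (of the form Θ = V_B·P·U_Fᴴ, where V_B and U_F are right and left singular-vector matrices of H_B and H_F respectively and P is a permutation matrix) such that σ_n(H_B·Θ·H_F) = min over pairs (i,j) ∈ {1,…,N_S}² with i+j = n+1 of σ_i(H_B)·σ_j(H_F). -/

import Mathlib

open Matrix

noncomputable def nthLargest {m : ℕ} (f : Fin m → ℝ) (n : ℕ) : ℝ :=
  if h : 1 ≤ n ∧ n ≤ m then (f ∘ Tuple.sort f) ⟨m - n, by omega⟩ else 0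

noncomputable def nthEig {m : ℕ} (Y : Matrix (Fin m) (Fin m) ℂ) (hY : Y.IsHermitian) (n : ℕ) : ℝ :=
  nthLargest hY.eigenvalues n

/-- The `n`-th largest singular value (1-based) of a complex matrix, equal to the square root
of the `n`-th largest eigenvalue of `A * Aᴴ`, with the convention that it is `0` whenever
`n` exceeds the matrix dimensions. -/
noncomputable def singVal {r c : ℕ} (A : Matrix (Fin r) (Fin c) ℂ) (n : ℕ) : ℝ :=
  Real.sqrt (nthLargest (Matrix.isHermitian_mul_conjTranspose_self A).eigenvalues n)

section Helpers
open Polynomial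

lemma charpoly_unitary_conj {r : ℕ} (U M : Matrix (Fin r) (Fin r) ℂ) (hU : Uᴴ * U = 1) :
    (U * M * Uᴴ).charpoly = M.charpoly := by
  have hU' : U * Uᴴ = 1 := mul_eq_one_comm.mp hU
  have hcm : charmatrix (U * M * Uᴴ) =
      U.map C * charmatrix M * Uᴴ.map C := by
    unfold charmatrix
    rw [Matrix.mul_sub, Matrix.sub_mul]
    congr 1
    · show _ = U.map C * (Matrix.scalar (Fin r) X) * Uᴴ.map C
      rw [← (Matrix.scalar_commute (X : ℂ[X]) (fun r' => Commute.all _ _) (U.map C)).eq,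
        Matrix.mul_assoc, ← Matrix.map_mul, hU', Matrix.map_one _ (map_zero C) (map_one C),
        Matrix.mul_one]
    · ext i j
      simp [RingHom.mapMatrix_apply, ← Matrix.map_mul]
  unfold Matrix.charpoly
  rw [hcm, Matrix.det_mul, Matrix.det_mul, mul_comm, ← mul_assoc, ← Matrix.det_mul,
    ← Matrix.map_mul, hU, Matrix.map_one _ (map_zero C) (map_one C), Matrix.det_one, one_mul]

lemma charpoly_diagonal {r : ℕ} (d : Fin r → ℂ) :
    (Matrix.diagonal d).charpoly = ∏ i, (X - C (d i)) := by
  have : charmatrix (Matrix.diagonal d) = Matrix.diagonal (fun i => (X : ℂ[X]) - C (d i)) := by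
    ext i j
    by_cases h : i = j
    · subst h; simp
    · simp [charmatrix_apply_ne _ _ _ h, Matrix.diagonal_apply_ne _ h]
  rw [Matrix.charpoly, this, Matrix.det_diagonal]


lemma prod_X_sub_C_eq_ofFn {r : ℕ} (a : Fin r → ℂ) :
    ∏ i, (X - C (a i)) = (((List.ofFn a : List ℂ) : Multiset ℂ).map fun x => X - C x).prod := by
  rw [← Fin.univ_val_map, Multiset.map_map]
  rfl

lemma multiset_eq_of_prod_eq {r : ℕ} (a b : Fin r → ℂ)
    (h : ∏ i, (X - C (a i)) = ∏ i, (X - C (b i))) :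
    ((List.ofFn a : List ℂ) : Multiset ℂ) = (List.ofFn b : List ℂ) := by
  have := congrArg Polynomial.roots
    ((prod_X_sub_C_eq_ofFn a).symm.trans (h.trans (prod_X_sub_C_eq_ofFn b)))
  rwa [Polynomial.roots_multiset_prod_X_sub_C, Polynomial.roots_multiset_prod_X_sub_C] at this

lemma eig_multiset {r : ℕ} {A U : Matrix (Fin r) (Fin r) ℂ} (hA : A.IsHermitian)
    (hU : Uᴴ * U = 1) (d : Fin r → ℝ)
    (h : A = U * Matrix.diagonal (fun i => (d i : ℂ)) * Uᴴ) :
    ((List.ofFn hA.eigenvalues : List ℝ) : Multiset ℝ) = (List.ofFn d : List ℝ) := by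
  have h1 : A.charpoly = ∏ i, (X - C ((d i : ℂ))) := by
    rw [h, charpoly_unitary_conj _ _ hU, charpoly_diagonal]
  have h2 : A.charpoly = ∏ i, (X - C ((hA.eigenvalues i : ℂ))) := by
    conv_lhs => rw [hA.spectral_theorem, Unitary.conjStarAlgAut_apply]
    rw [show (star (hA.eigenvectorUnitary : Matrix (Fin r) (Fin r) ℂ))
        = (hA.eigenvectorUnitary : Matrix (Fin r) (Fin r) ℂ)ᴴ from rfl,
      show Matrix.diagonal (RCLike.ofReal ∘ hA.eigenvalues)
        = Matrix.diagonal (fun i => ((hA.eigenvalues i : ℝ) : ℂ)) from rfl,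
      charpoly_unitary_conj _ _ (by
        simpa [star_eq_conjTranspose] using
          (Unitary.star_mul_self_of_mem (hA.eigenvectorUnitary).2)), charpoly_diagonal]
  have h3 := multiset_eq_of_prod_eq _ _ (h2.symm.trans h1)
  have h4 : ((List.ofFn (fun i => ((hA.eigenvalues i : ℝ) : ℂ))) : Multiset ℂ)
      = ((List.ofFn hA.eigenvalues : List ℝ) : Multiset ℝ).map (fun x : ℝ => (x : ℂ)) := by
    simp [Multiset.map_coe, List.map_ofFn]; rfl
  have h5 : ((List.ofFn (fun i => ((d i : ℝ) : ℂ))) : Multiset ℂ)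
      = ((List.ofFn d : List ℝ) : Multiset ℝ).map (fun x : ℝ => (x : ℂ)) := by
    simp [Multiset.map_coe, List.map_ofFn]; rfl
  rw [h4, h5] at h3
  exact Multiset.map_injective (fun x y => by exact_mod_cast id) h3


lemma sorted_congr {m : ℕ} {f g : Fin m → ℝ}
    (h : ((List.ofFn f : List ℝ) : Multiset ℝ) = (List.ofFn g : List ℝ)) :
    f ∘ Tuple.sort f = g ∘ Tuple.sort g := by
  apply List.ofFn_injective
  refine (fun hp h1 h2 => List.Perm.eq_of_sortedLE h1 h2 hp) ?_ ?_ ?_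
  · exact ((Tuple.sort f).ofFn_comp_perm f).trans
      ((Multiset.coe_eq_coe.mp h).trans ((Tuple.sort g).ofFn_comp_perm g).symm)
  · exact (Tuple.monotone_sort f).sortedLE_ofFn
  · exact (Tuple.monotone_sort g).sortedLE_ofFn

lemma nthLargest_congr {m : ℕ} {f g : Fin m → ℝ}
    (h : ((List.ofFn f : List ℝ) : Multiset ℝ) = (List.ofFn g : List ℝ)) (n : ℕ) :
    nthLargest f n = nthLargest g n := by
  unfold nthLargest
  split
  · rw [sorted_congr h]
  · rfl

lemma nthLargest_nonneg {m : ℕ} {f : Fin m → ℝ} (hf : ∀ i, 0 ≤ f i) (n : ℕ) :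
    0 ≤ nthLargest f n := by
  unfold nthLargest
  split
  · exact hf _
  · exact le_refl 0

lemma nthLargest_antitone {m : ℕ} {f : Fin m → ℝ} (hf : ∀ i, 0 ≤ f i) {k l : ℕ}
    (hk : 1 ≤ k) (hkl : k ≤ l) : nthLargest f l ≤ nthLargest f k := by
  unfold nthLargest
  by_cases hl : 1 ≤ l ∧ l ≤ m
  · rw [dif_pos hl, dif_pos ⟨hk, le_trans hkl hl.2⟩]
    exact Tuple.monotone_sort f (by simp [Fin.le_def]; omega)
  · rw [dif_neg hl]
    split
    · exact hf _
    · exact le_refl 0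

lemma nthLargest_eq_of_counts {m : ℕ} (f : Fin m → ℝ) (a : ℝ) (n : ℕ) (hn1 : 1 ≤ n) (hn2 : n ≤ m)
    (h1 : n ≤ Fintype.card {i // a ≤ f i})
    (h2 : Fintype.card {i // a < f i} < n) :
    nthLargest f n = a := by
  classical
  unfold nthLargest
  rw [dif_pos ⟨hn1, hn2⟩]
  set σ := Tuple.sort f with hσ
  set q : Fin m → ℝ := f ∘ σ with hqdef
  have hq : Monotone q := Tuple.monotone_sort f
  have hc1 : ∀ b : ℝ, Fintype.card {i // b ≤ q i} = Fintype.card {i // b ≤ f i} := by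
    intro b
    exact Fintype.card_congr (σ.subtypeEquiv (fun i => Iff.rfl))
  have hc2 : ∀ b : ℝ, Fintype.card {i // b < q i} = Fintype.card {i // b < f i} := by
    intro b
    exact Fintype.card_congr (σ.subtypeEquiv (fun i => Iff.rfl))
  set j : Fin m := ⟨m - n, by omega⟩ with hj
  have hge : a ≤ q j := by
    by_contra hc
    push_neg at hc
    have hsub : Finset.univ.filter (fun i => a ≤ q i) ⊆ Finset.Ioi j := by
      intro i hi
      simp only [Finset.mem_filter] at hi
      simp only [Finset.mem_Ioi]
      by_contra hji
      push_neg at hji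
      exact absurd (le_trans hi.2 (hq hji)) (not_le.mpr hc)
    have := Finset.card_le_card hsub
    rw [Fin.card_Ioi] at this
    rw [← hc1 a, Fintype.card_subtype] at h1
    simp only [hj] at this
    omega
  have hle : q j ≤ a := by
    by_contra hc
    push_neg at hc
    have hsub : Finset.Ici j ⊆ Finset.univ.filter (fun i => a < q i) := by
      intro i hi
      simp only [Finset.mem_Ici] at hi
      simp only [Finset.mem_filter, Finset.mem_univ, true_and]
      exact lt_of_lt_of_le hc (hq hi)
    have := Finset.card_le_card hsub
    rw [Fin.card_Ici] at this
    rw [← hc2 a, Fintype.card_subtype] at h2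
    simp only [hj] at this
    omega
  exact le_antisymm hle hge


lemma sig_mul_conj {r c : ℕ} (s : ℕ → ℝ) :
    ((Matrix.of fun (i : Fin r) (j : Fin c) =>
        if (i : ℕ) = (j : ℕ) then ((s ((i : ℕ) + 1) : ℝ) : ℂ) else 0) *
      (Matrix.of fun (i : Fin r) (j : Fin c) =>
        if (i : ℕ) = (j : ℕ) then ((s ((i : ℕ) + 1) : ℝ) : ℂ) else 0)ᴴ)
    = Matrix.diagonal (fun i : Fin r =>
        if (i : ℕ) < c then ((s ((i : ℕ) + 1) ^ 2 : ℝ) : ℂ) else 0) := by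
  ext i i'
  simp only [Matrix.mul_apply, Matrix.conjTranspose_apply, Matrix.of_apply]
  by_cases h : i = i'
  · subst h
    rw [Matrix.diagonal_apply_eq]
    by_cases hc : (i : ℕ) < c
    · rw [if_pos hc, Finset.sum_eq_single (⟨(i : ℕ), hc⟩ : Fin c)]
      · simp [pow_two]
      · intro k _ hk
        have h1 : ¬((i : ℕ) = (k : ℕ)) := fun hik => hk (Fin.ext hik.symm)
        rw [if_neg h1, zero_mul]
      · intro h; exact absurd (Finset.mem_univ _) h
    · rw [if_neg hc, Finset.sum_eq_zero]
      intro k _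
      have h1 : ¬((i : ℕ) = (k : ℕ)) := fun hik => hc (hik ▸ k.2)
      rw [if_neg h1, zero_mul]
  · rw [Matrix.diagonal_apply_ne _ h, Finset.sum_eq_zero]
    intro k _
    by_cases h1 : (i : ℕ) = (k : ℕ)
    · have h2 : ¬((i' : ℕ) = (k : ℕ)) := fun h2 => h (Fin.ext (h1.trans h2.symm))
      rw [if_neg h2, star_zero, mul_zero]
    · rw [if_neg h1, zero_mul]

lemma perm_diag_conj {r c : ℕ} (e : Equiv.Perm (Fin c)) (b g : ℕ → ℝ) :
    ((Matrix.of fun (i : Fin r) (j : Fin c) =>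
        if (i : ℕ) = (j : ℕ) then ((b ((i : ℕ) + 1) : ℝ) : ℂ) else 0).submatrix id ⇑e.symm *
      Matrix.diagonal (fun k : Fin c => ((g ((k : ℕ) + 1) : ℝ) : ℂ)) *
      ((Matrix.of fun (i : Fin r) (j : Fin c) =>
        if (i : ℕ) = (j : ℕ) then ((b ((i : ℕ) + 1) : ℝ) : ℂ) else 0).submatrix id ⇑e.symm)ᴴ)
    = Matrix.diagonal (fun i : Fin r =>
        if h : (i : ℕ) < c then
          ((b ((i : ℕ) + 1) ^ 2 * g (((e ⟨(i : ℕ), h⟩ : Fin c) : ℕ) + 1) : ℝ) : ℂ) else 0) := by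
  ext i i'
  rw [show ∀ (A : Matrix (Fin r) (Fin c) ℂ) (D : Matrix (Fin c) (Fin c) ℂ)
      (B : Matrix (Fin c) (Fin r) ℂ), (A * D * B) i i' = ∑ k, (A * D) i k * B k i' from
      fun A D B => Matrix.mul_apply]
  simp only [Matrix.mul_diagonal, Matrix.conjTranspose_apply, Matrix.submatrix_apply, id_eq,
    Matrix.of_apply]
  by_cases h : i = i'
  · subst h
    rw [Matrix.diagonal_apply_eq]
    by_cases hc : (i : ℕ) < c
    · rw [dif_pos hc, Finset.sum_eq_single (e ⟨(i : ℕ), hc⟩)]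
      · rw [e.symm_apply_apply]
        simp [pow_two]
        ring
      · intro k _ hk
        have h1 : ¬((i : ℕ) = ((e.symm k : Fin c) : ℕ)) := by
          intro hik
          apply hk
          have : e.symm k = ⟨(i : ℕ), hc⟩ := Fin.ext hik.symm
          rw [← this, e.apply_symm_apply]
        rw [if_neg h1, zero_mul, zero_mul]
      · intro h; exact absurd (Finset.mem_univ _) h
    · rw [dif_neg hc, Finset.sum_eq_zero]
      intro k _
      have h1 : ¬((i : ℕ) = ((e.symm k : Fin c) : ℕ)) := fun hik => hc (hik ▸ (e.symm k).2)
      rw [if_neg h1, zero_mul, zero_mul]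
  · rw [Matrix.diagonal_apply_ne _ h, Finset.sum_eq_zero]
    intro k _
    by_cases h1 : (i : ℕ) = ((e.symm k : Fin c) : ℕ)
    · have h2 : ¬((i' : ℕ) = ((e.symm k : Fin c) : ℕ)) := fun h2 => h (Fin.ext (h1.trans h2.symm))
      rw [if_neg h2, star_zero, mul_zero]
    · rw [if_neg h1, zero_mul, zero_mul]


lemma permMatrix_conjT {c : ℕ} (e : Equiv.Perm (Fin c)) :
    (e.permMatrix ℂ)ᴴ = (e⁻¹).permMatrix ℂ := by
  ext i j
  simp only [Matrix.conjTranspose_apply, Equiv.Perm.permMatrix, PEquiv.toMatrix_apply,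
    Equiv.toPEquiv_apply, Option.mem_def, Option.some.injEq]
  by_cases h : e j = i
  · rw [if_pos h, if_pos (by rw [← h, Equiv.Perm.inv_def, Equiv.symm_apply_apply]), star_one]
  · rw [if_neg h, if_neg (fun h2 => h (by rw [← h2, Equiv.Perm.inv_def, Equiv.apply_symm_apply])), star_zero]

lemma permMatrix_unitary {c : ℕ} (e : Equiv.Perm (Fin c)) :
    (e.permMatrix ℂ)ᴴ * (e.permMatrix ℂ) = 1 := by
  rw [permMatrix_conjT]
  show ((e⁻¹).toPEquiv.toMatrix : Matrix (Fin c) (Fin c) ℂ) * e.toPEquiv.toMatrix = 1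
  rw [← PEquiv.toMatrix_trans, ← Equiv.toPEquiv_trans]
  have : (e⁻¹).trans e = Equiv.refl (Fin c) := by
    ext x; simp
  rw [this, Equiv.toPEquiv_refl, PEquiv.toMatrix_refl]

lemma singVal_nonneg {r c : ℕ} (A : Matrix (Fin r) (Fin c) ℂ) (n : ℕ) : 0 ≤ singVal A n :=
  Real.sqrt_nonneg _

open scoped ComplexOrder in
lemma singVal_antitone {r c : ℕ} (A : Matrix (Fin r) (Fin c) ℂ) {k l : ℕ}
    (hk : 1 ≤ k) (hkl : k ≤ l) : singVal A l ≤ singVal A k :=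
  Real.sqrt_le_sqrt (nthLargest_antitone
    (fun i => (Matrix.posSemidef_self_mul_conjTranspose A).eigenvalues_nonneg i) hk hkl)

lemma singVal_zero_of_gt {r c : ℕ} (A : Matrix (Fin r) (Fin c) ℂ) {k : ℕ} (hk : r < k) :
    singVal A k = 0 := by
  unfold singVal nthLargest
  rw [dif_neg (by omega), Real.sqrt_zero]

lemma singVal_eq_sqrt_of_diag {r c : ℕ} (A : Matrix (Fin r) (Fin c) ℂ)
    (U : Matrix (Fin r) (Fin r) ℂ) (hU : Uᴴ * U = 1) (d : Fin r → ℝ)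
    (h : A * Aᴴ = U * Matrix.diagonal (fun i => ((d i : ℝ) : ℂ)) * Uᴴ) (k : ℕ) :
    singVal A k = Real.sqrt (nthLargest d k) := by
  unfold singVal
  congr 1
  exact nthLargest_congr (eig_multiset _ hU d h) k

lemma conj_of_usv {p r : ℕ} (A : Matrix (Fin p) (Fin r) ℂ) (U : Matrix (Fin p) (Fin p) ℂ)
    (S : Matrix (Fin p) (Fin r) ℂ) (V : Matrix (Fin r) (Fin r) ℂ)
    (hV : Vᴴ * V = 1) (hA : A = U * S * Vᴴ) :
    A * Aᴴ = U * (S * Sᴴ) * Uᴴ := by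
  rw [hA]
  simp only [Matrix.conjTranspose_mul, Matrix.conjTranspose_conjTranspose, Matrix.mul_assoc]
  rw [show Vᴴ * (V * (Sᴴ * Uᴴ)) = Sᴴ * Uᴴ from by rw [← Matrix.mul_assoc, hV, Matrix.one_mul]]

end Helpers

theorem stmt12 {N_R N_S N_T : ℕ}
    (H_B : Matrix (Fin N_R) (Fin N_S) ℂ) (H_F : Matrix (Fin N_S) (Fin N_T) ℂ)
    -- singular value decompositions `H_B = U_B Σ_B V_Bᴴ` and `H_F = U_F Σ_F V_Fᴴ`,
    -- with the singular values in descending order on the diagonal: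
    (U_B : Matrix (Fin N_R) (Fin N_R) ℂ) (V_B : Matrix (Fin N_S) (Fin N_S) ℂ)
    (U_F : Matrix (Fin N_S) (Fin N_S) ℂ) (V_F : Matrix (Fin N_T) (Fin N_T) ℂ)
    (hUB : U_Bᴴ * U_B = 1) (hVB : V_Bᴴ * V_B = 1)
    (hUF : U_Fᴴ * U_F = 1) (hVF : V_Fᴴ * V_F = 1)
    (hB : H_B = U_B * (Matrix.of fun (i : Fin N_R) (j : Fin N_S) =>
      if (i : ℕ) = (j : ℕ) then ((singVal H_B ((i : ℕ) + 1) : ℝ) : ℂ) else 0) * V_Bᴴ)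
    (hF : H_F = U_F * (Matrix.of fun (i : Fin N_S) (j : Fin N_T) =>
      if (i : ℕ) = (j : ℕ) then ((singVal H_F ((i : ℕ) + 1) : ℝ) : ℂ) else 0) * V_Fᴴ)
    (n : ℕ) (hn1 : 1 ≤ n) (hn2 : n ≤ N_S) :
    ∃ (Θ : Matrix (Fin N_S) (Fin N_S) ℂ) (e : Equiv.Perm (Fin N_S)),
      Θ = V_B * e.permMatrix ℂ * U_Fᴴ ∧ Θᴴ * Θ = 1 ∧
      singVal (H_B * Θ * H_F) n =
        sInf {x : ℝ | ∃ i j : ℕ, 1 ≤ i ∧ i ≤ N_S ∧ 1 ≤ j ∧ j ≤ N_S ∧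
          i + j = n + 1 ∧ x = singVal H_B i * singVal H_F j} := by
  classical
  have hnS : 1 ≤ N_S := le_trans hn1 hn2
  -- the involutive permutation reversing the first `n` indices
  have hφ : Function.Involutive (fun x : Fin N_S =>
      (⟨if (x : ℕ) < n then n - 1 - (x : ℕ) else (x : ℕ), by
        split_ifs with h
        · omega
        · exact x.2⟩ : Fin N_S)) := by
    intro x
    apply Fin.ext
    show (if (if (x : ℕ) < n then n - 1 - (x : ℕ) else (x : ℕ)) < n then
        n - 1 - (if (x : ℕ) < n then n - 1 - (x : ℕ) else (x : ℕ))
      else (if (x : ℕ) < n then n - 1 - (x : ℕ) else (x : ℕ))) = (x : ℕ)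
    split_ifs <;> omega
  set e : Equiv.Perm (Fin N_S) := Function.Involutive.toPerm _ hφ with hedef
  have hecoe : ⇑e = fun x : Fin N_S =>
      (⟨if (x : ℕ) < n then n - 1 - (x : ℕ) else (x : ℕ), by
        split_ifs with h
        · omega
        · exact x.2⟩ : Fin N_S) := Function.Involutive.coe_toPerm hφ
  have he1 : ∀ x : Fin N_S, (x : ℕ) < n → ((e x : Fin N_S) : ℕ) = n - 1 - (x : ℕ) := by
    intro x hx
    rw [hecoe]
    show (if (x : ℕ) < n then n - 1 - (x : ℕ) else (x : ℕ)) = n - 1 - (x : ℕ)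
    rw [if_pos hx]
  have he2 : ∀ x : Fin N_S, ¬((x : ℕ) < n) → e x = x := by
    intro x hx
    apply Fin.ext
    rw [hecoe]
    show (if (x : ℕ) < n then n - 1 - (x : ℕ) else (x : ℕ)) = (x : ℕ)
    rw [if_neg hx]
  set P : Matrix (Fin N_S) (Fin N_S) ℂ := e.permMatrix ℂ with hPdef
  set SB : Matrix (Fin N_R) (Fin N_S) ℂ := Matrix.of fun (i : Fin N_R) (j : Fin N_S) =>
      if (i : ℕ) = (j : ℕ) then ((singVal H_B ((i : ℕ) + 1) : ℝ) : ℂ) else 0 with hSB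
  set SF : Matrix (Fin N_S) (Fin N_T) ℂ := Matrix.of fun (i : Fin N_S) (j : Fin N_T) =>
      if (i : ℕ) = (j : ℕ) then ((singVal H_F ((i : ℕ) + 1) : ℝ) : ℂ) else 0 with hSF
  refine ⟨V_B * P * U_Fᴴ, e, rfl, ?_, ?_⟩
  · -- unitarity
    have hUF' : U_F * U_Fᴴ = 1 := mul_eq_one_comm.mp hUF
    simp only [Matrix.conjTranspose_mul, Matrix.conjTranspose_conjTranspose, Matrix.mul_assoc]
    rw [show V_Bᴴ * (V_B * (P * U_Fᴴ)) = P * U_Fᴴ from by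
        rw [← Matrix.mul_assoc, hVB, Matrix.one_mul],
      show Pᴴ * (P * U_Fᴴ) = U_Fᴴ from by
        rw [← Matrix.mul_assoc, permMatrix_unitary, Matrix.one_mul],
      hUF']
  -- the tail of the singular values of `H_F` vanishes
  have hFconj : H_F * H_Fᴴ = U_F * Matrix.diagonal
      (fun i : Fin N_S => (((if (i : ℕ) < N_T then singVal H_F ((i : ℕ) + 1) ^ 2 else 0 : ℝ)) : ℂ))
      * U_Fᴴ := by
    have h0 := conj_of_usv H_F U_F SF V_F hVF hF
    rw [h0, sig_mul_conj, show (fun i : Fin N_S =>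
        if (i : ℕ) < N_T then ((singVal H_F ((i : ℕ) + 1) ^ 2 : ℝ) : ℂ) else 0)
      = (fun i : Fin N_S =>
        (((if (i : ℕ) < N_T then singVal H_F ((i : ℕ) + 1) ^ 2 else 0 : ℝ)) : ℂ)) from by
        funext i
        by_cases h : (i : ℕ) < N_T <;> simp [h]]
  have hFs : ∀ k : ℕ, singVal H_F k = Real.sqrt (nthLargest
      (fun i : Fin N_S => if (i : ℕ) < N_T then singVal H_F ((i : ℕ) + 1) ^ 2 else 0) k) :=
    fun k => singVal_eq_sqrt_of_diag H_F U_F hUF _ hFconj k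
  have hftail : ∀ k : ℕ, N_T < k → singVal H_F k = 0 := by
    intro k hk
    by_cases hks : k ≤ N_S
    · set gF : Fin N_S → ℝ :=
        fun i => if (i : ℕ) < N_T then singVal H_F ((i : ℕ) + 1) ^ 2 else 0 with hgF
      have h1 : k ≤ Fintype.card {i : Fin N_S // 0 ≤ gF i} := by
        have : Fintype.card {i : Fin N_S // 0 ≤ gF i} = N_S := by
          rw [Fintype.card_subtype, Finset.filter_true_of_mem, Finset.card_univ, Fintype.card_fin]
          intro i _
          rw [hgF]
          by_cases h : (i : ℕ) < N_T
          · simp only [if_pos h]; positivity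
          · simp [if_neg h]
        omega
      have h2 : Fintype.card {i : Fin N_S // 0 < gF i} < k := by
        have hle : Fintype.card {i : Fin N_S // 0 < gF i} ≤ N_T := by
          rw [Fintype.card_subtype]
          calc (Finset.univ.filter fun i : Fin N_S => 0 < gF i).card
              ≤ (Finset.range N_T).card := by
                apply Finset.card_le_card_of_injOn (fun i : Fin N_S => (i : ℕ))
                · intro i hi
                  simp only [Finset.mem_coe, Finset.mem_filter, Finset.mem_univ, true_and] at hi
                  simp only [Finset.mem_coe, Finset.mem_range]
                  by_contra h
                  rw [hgF] at hi
                  simp only [if_neg h, lt_self_iff_false] at hi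
                · intro a _ b _ h
                  exact Fin.ext h
            _ = N_T := Finset.card_range N_T
        omega
      rw [hFs k, nthLargest_eq_of_counts _ 0 k (by omega) hks h1 h2, Real.sqrt_zero]
    · exact singVal_zero_of_gt H_F (by omega)
  -- the product and its conjugate
  have hSB : SB * P = SB.submatrix id ⇑e.symm := PEquiv.mul_toMatrix_toPEquiv SB e
  have hprod : H_B * (V_B * P * U_Fᴴ) * H_F
      = U_B * (SB.submatrix id ⇑e.symm * SF) * V_Fᴴ := by
    conv_lhs => rw [hB, hF]
    rw [← hSB]
    simp only [Matrix.mul_assoc]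
    rw [show V_Bᴴ * (V_B * (P * (U_Fᴴ * (U_F * (SF * V_Fᴴ)))))
          = P * (U_Fᴴ * (U_F * (SF * V_Fᴴ))) from by
        rw [← Matrix.mul_assoc, hVB, Matrix.one_mul],
      show U_Fᴴ * (U_F * (SF * V_Fᴴ)) = SF * V_Fᴴ from by
        rw [← Matrix.mul_assoc, hUF, Matrix.one_mul]]
  set ddR : Fin N_R → ℝ := fun i =>
    if h : (i : ℕ) < N_S then
      singVal H_B ((i : ℕ) + 1) ^ 2 * singVal H_F (((e ⟨(i : ℕ), h⟩ : Fin N_S) : ℕ) + 1) ^ 2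
    else 0 with hddR
  have hMconj : (H_B * (V_B * P * U_Fᴴ) * H_F) * (H_B * (V_B * P * U_Fᴴ) * H_F)ᴴ
      = U_B * Matrix.diagonal (fun i : Fin N_R => ((ddR i : ℝ) : ℂ)) * U_Bᴴ := by
    have h1 := conj_of_usv _ U_B (SB.submatrix id ⇑e.symm * SF) V_F hVF hprod
    rw [h1]
    have h2 : (SB.submatrix id ⇑e.symm * SF) * (SB.submatrix id ⇑e.symm * SF)ᴴ
        = SB.submatrix id ⇑e.symm * (SF * SFᴴ) * (SB.submatrix id ⇑e.symm)ᴴ := by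
      simp only [Matrix.conjTranspose_mul, Matrix.mul_assoc]
    have h3 : SF * SFᴴ = Matrix.diagonal
        (fun k : Fin N_S => (((fun j : ℕ => singVal H_F j ^ 2) ((k : ℕ) + 1) : ℝ) : ℂ)) := by
      rw [hSF, sig_mul_conj]
      apply congrArg Matrix.diagonal
      funext k
      by_cases h : (k : ℕ) < N_T
      · simp only [if_pos h]
      · simp only [if_neg h, hftail ((k : ℕ) + 1) (by omega)]
        norm_num
    have h4 : Matrix.diagonal (fun i : Fin N_R => if h : (i : ℕ) < N_S then
          ((singVal H_B ((i : ℕ) + 1) ^ 2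
            * singVal H_F (((e ⟨(i : ℕ), h⟩ : Fin N_S) : ℕ) + 1) ^ 2 : ℝ) : ℂ) else 0)
        = Matrix.diagonal (fun i : Fin N_R => ((ddR i : ℝ) : ℂ)) := by
      apply congrArg Matrix.diagonal
      funext i
      by_cases h : (i : ℕ) < N_S
      · simp only [hddR, dif_pos h]
      · simp only [hddR, dif_neg h, Complex.ofReal_zero]
    rw [h2, h3, perm_diag_conj e (singVal H_B) (fun j : ℕ => singVal H_F j ^ 2), h4]
  have hsing : singVal (H_B * (V_B * P * U_Fᴴ) * H_F) n = Real.sqrt (nthLargest ddR n) :=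
    singVal_eq_sqrt_of_diag _ U_B hUB ddR hMconj n
  -- the infimum
  have hTeq : {x : ℝ | ∃ i j : ℕ, 1 ≤ i ∧ i ≤ N_S ∧ 1 ≤ j ∧ j ≤ N_S ∧
        i + j = n + 1 ∧ x = singVal H_B i * singVal H_F j}
      = (fun i : ℕ => singVal H_B i * singVal H_F (n + 1 - i)) '' Set.Icc 1 n := by
    ext x
    simp only [Set.mem_setOf_eq, Set.mem_image, Set.mem_Icc]
    constructor
    · rintro ⟨i, j, h1, h2, h3, h4, h5, h6⟩
      exact ⟨i, ⟨h1, by omega⟩, by rw [show n + 1 - i = j from by omega]; exact h6.symm⟩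
    · rintro ⟨i, ⟨h1, h2⟩, rfl⟩
      exact ⟨i, n + 1 - i, h1, by omega, by omega, by omega, by omega, rfl⟩
  have hfin : Set.Finite {x : ℝ | ∃ i j : ℕ, 1 ≤ i ∧ i ≤ N_S ∧ 1 ≤ j ∧ j ≤ N_S ∧
      i + j = n + 1 ∧ x = singVal H_B i * singVal H_F j} := by
    rw [hTeq]; exact (Set.finite_Icc 1 n).image _
  have hne : Set.Nonempty {x : ℝ | ∃ i j : ℕ, 1 ≤ i ∧ i ≤ N_S ∧ 1 ≤ j ∧ j ≤ N_S ∧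
      i + j = n + 1 ∧ x = singVal H_B i * singVal H_F j} :=
    ⟨singVal H_B 1 * singVal H_F n, 1, n, le_refl 1, hnS, hn1, hn2, by omega, rfl⟩
  set T : Set ℝ := {x : ℝ | ∃ i j : ℕ, 1 ≤ i ∧ i ≤ N_S ∧ 1 ≤ j ∧ j ≤ N_S ∧
      i + j = n + 1 ∧ x = singVal H_B i * singVal H_F j} with hTdef
  have hmem := hne.csInf_mem hfin
  have hlow : ∀ x ∈ T, sInf T ≤ x := fun x hx => csInf_le hfin.bddBelow hx
  obtain ⟨i₀, j₀, hi₀1, hi₀2, hj₀1, hj₀2, hij₀, hmv⟩ := hmem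
  have hm0 : 0 ≤ sInf T := by
    rw [hmv]; exact mul_nonneg (singVal_nonneg _ _) (singVal_nonneg _ _)
  by_cases hnR : n ≤ N_R
  · -- main case
    have h1c : n ≤ Fintype.card {i : Fin N_R // sInf T ^ 2 ≤ ddR i} := by
      have hval : ∀ k : Fin n, sInf T ^ 2 ≤ ddR ⟨(k : ℕ), by omega⟩ := by
        intro k
        have hkS : (k : ℕ) < N_S := by omega
        have hkn : (k : ℕ) < n := k.2
        have heval : ((e ⟨(k : ℕ), hkS⟩ : Fin N_S) : ℕ) = n - 1 - (k : ℕ) := he1 _ hkn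
        have hdd : ddR ⟨(k : ℕ), by omega⟩
            = (singVal H_B ((k : ℕ) + 1) * singVal H_F (n - (k : ℕ))) ^ 2 := by
          rw [hddR]
          simp only [dif_pos hkS]
          rw [heval, show n - 1 - (k : ℕ) + 1 = n - (k : ℕ) from by omega, mul_pow]
        rw [hdd]
        have hmemT : singVal H_B ((k : ℕ) + 1) * singVal H_F (n - (k : ℕ)) ∈ T :=
          ⟨(k : ℕ) + 1, n - (k : ℕ), by omega, by omega, by omega, by omega, by omega, rfl⟩
        exact pow_le_pow_left₀ hm0 (hlow _ hmemT) 2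
      have : Function.Injective (fun k : Fin n =>
          (⟨⟨(k : ℕ), by omega⟩, hval k⟩ : {i : Fin N_R // sInf T ^ 2 ≤ ddR i})) := by
        intro a b hab
        have : ((a : ℕ) : ℕ) = (b : ℕ) := congrArg (fun z : {i : Fin N_R // _} => ((z : Fin N_R) : ℕ)) hab
        exact Fin.ext this
      calc n = Fintype.card (Fin n) := (Fintype.card_fin n).symm
        _ ≤ _ := Fintype.card_le_of_injective _ this
    have h2c : Fintype.card {i : Fin N_R // sInf T ^ 2 < ddR i} < n := by
      have key : ∀ i : Fin N_R, sInf T ^ 2 < ddR i → (i : ℕ) < n ∧ (i : ℕ) ≠ i₀ - 1 := by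
        intro i hi
        have hin : (i : ℕ) < n := by
          by_contra hge
          push_neg at hge
          apply not_le.mpr hi
          by_cases hiS : (i : ℕ) < N_S
          · have heq : e ⟨(i : ℕ), hiS⟩ = ⟨(i : ℕ), hiS⟩ := he2 _ (by simpa using not_lt.mpr hge)
            have hdd : ddR i = (singVal H_B ((i : ℕ) + 1) * singVal H_F ((i : ℕ) + 1)) ^ 2 := by
              rw [hddR]
              simp only [dif_pos hiS]
              rw [heq, mul_pow]
            rw [hdd]
            have hb : singVal H_B ((i : ℕ) + 1) ≤ singVal H_B i₀ :=
              singVal_antitone H_B hi₀1 (by omega)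
            have hf : singVal H_F ((i : ℕ) + 1) ≤ singVal H_F j₀ :=
              singVal_antitone H_F hj₀1 (by omega)
            have : singVal H_B ((i : ℕ) + 1) * singVal H_F ((i : ℕ) + 1)
                ≤ singVal H_B i₀ * singVal H_F j₀ :=
              mul_le_mul hb hf (singVal_nonneg _ _) (singVal_nonneg _ _)
            rw [hmv]
            exact pow_le_pow_left₀ (mul_nonneg (singVal_nonneg _ _) (singVal_nonneg _ _))
              this 2
          · have hdd : ddR i = 0 := by rw [hddR]; simp only [dif_neg hiS]
            rw [hdd]
            positivity
        refine ⟨hin, ?_⟩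
        intro hieq
        apply not_le.mpr hi
        have hiS : (i : ℕ) < N_S := by omega
        have heval : ((e ⟨(i : ℕ), hiS⟩ : Fin N_S) : ℕ) = n - 1 - (i : ℕ) := he1 _ hin
        have hdd : ddR i = (singVal H_B ((i : ℕ) + 1) * singVal H_F (n - (i : ℕ))) ^ 2 := by
          rw [hddR]
          simp only [dif_pos hiS]
          rw [heval, show n - 1 - (i : ℕ) + 1 = n - (i : ℕ) from by omega, mul_pow]
        rw [hdd, hieq, show i₀ - 1 + 1 = i₀ from by omega,
          show n - (i₀ - 1) = j₀ from by omega, ← hmv]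
      have hle : Fintype.card {i : Fin N_R // sInf T ^ 2 < ddR i} ≤ n - 1 := by
        rw [Fintype.card_subtype]
        calc (Finset.univ.filter fun i : Fin N_R => sInf T ^ 2 < ddR i).card
            ≤ ((Finset.range n).erase (i₀ - 1)).card := by
              apply Finset.card_le_card_of_injOn (fun i : Fin N_R => (i : ℕ))
              · intro i hi
                simp only [Finset.mem_coe, Finset.mem_filter, Finset.mem_univ, true_and] at hi
                obtain ⟨h1, h2⟩ := key i hi
                exact Finset.mem_erase.mpr ⟨h2, Finset.mem_range.mpr h1⟩
              · intro a _ b _ h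
                exact Fin.ext h
          _ = n - 1 := by
              rw [Finset.card_erase_of_mem (Finset.mem_range.mpr (by omega)), Finset.card_range]
      omega
    rw [hsing, nthLargest_eq_of_counts ddR (sInf T ^ 2) n hn1 hnR h1c h2c, Real.sqrt_sq hm0]
  · -- degenerate case `N_R < n`
    have hz : nthLargest ddR n = 0 := by
      unfold nthLargest
      rw [dif_neg (by omega)]
    rw [hsing, hz, Real.sqrt_zero]
    have hbn : singVal H_B n = 0 := singVal_zero_of_gt H_B (by omega)
    have hmemT : singVal H_B n * singVal H_F 1 ∈ T :=
      ⟨n, 1, hn1, hn2, le_refl 1, hnS, by omega, rfl⟩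
    have : sInf T ≤ 0 := by
      have := hlow _ hmemT
      rw [hbn, zero_mul] at this
      exact this
    exact (le_antisymm this hm0).symm
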